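/- Let r ∈ ℚ with continued-fraction expansion r = a₀ + 1/(a₁ + 1/(⋯ + 1/aₙ)), with convergents p_j/q_j defined by p₋₂ = 0, q₋₂ = 1, p₋₁ = 1, q₋₁ = 0, p_j = a_j p_{j−1} + p_{j−2}, q_j = a_j q_{j−1} + q_{j−2}. Set a_{n+1} := −q_{n−1}/q_n ∈ ℚ and, for −1 ≤ j ≤ n, let τ_j := [[(−1)^{j−1} p_j, p_{j−1}], [(−1)^{j−1} q_j, q_{j−1}]] ∈ SL₂(ℤ). Then in Ξ₀ one has the relation [π₀(∞), π_r(∞)] + Σ_{j=−1}^{n} τ_j·[π_∞((−1)^{j+1} a_{j+1}), π₀(∞)] = 0. -/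

import Mathlib

noncomputable section

open scoped MatrixGroups

/-- The projective line over `ℚ`, i.e. `P¹(ℚ)`. -/
abbrev P1 : Type := Projectivization ℚ (Fin 2 → ℚ)

namespace PaperMS

/-- The linear automorphism of `ℚ²` attached to `γ ∈ GL₂(ℚ)`. -/
def glEquiv (γ : GL (Fin 2) ℚ) : (Fin 2 → ℚ) ≃ₗ[ℚ] (Fin 2 → ℚ) :=
  LinearMap.GeneralLinearGroup.generalLinearEquiv ℚ (Fin 2 → ℚ)
    (Matrix.GeneralLinearGroup.toLin γ)

lemma glEquiv_one : glEquiv 1 = LinearEquiv.refl ℚ (Fin 2 → ℚ) := by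
  simp only [glEquiv, map_one]
  rfl

lemma glEquiv_mul (γ δ : GL (Fin 2) ℚ) :
    glEquiv (γ * δ) = (glEquiv δ).trans (glEquiv γ) := by
  simp only [glEquiv, map_mul]
  rfl

/-- The Möbius action of `GL₂(ℚ)` on `P¹(ℚ)`. -/
instance : MulAction (GL (Fin 2) ℚ) P1 where
  smul γ := Projectivization.map (glEquiv γ).toLinearMap (glEquiv γ).injective
  one_smul x := by
    induction x using Projectivization.ind with
    | h v hv =>
      show Projectivization.map _ _ _ = _
      rw [Projectivization.map_mk]
      simp [glEquiv_one]
  mul_smul γ δ x := by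
    induction x using Projectivization.ind with
    | h v hv =>
      show Projectivization.map _ _ _ =
        Projectivization.map _ _ (Projectivization.map _ _ _)
      rw [Projectivization.map_mk, Projectivization.map_mk, Projectivization.map_mk]
      simp [glEquiv_mul]

lemma smul_P1_def (γ : GL (Fin 2) ℚ) (x : P1) :
    γ • x = Projectivization.map (glEquiv γ).toLinearMap (glEquiv γ).injective x := rfl

/-- The point of `P¹(ℚ)` attached to a rational number. -/
def ptQ (x : ℚ) : P1 :=
  Projectivization.mk ℚ ![x, 1] (by
    intro h
    have := congrFun h 1
    simp at this)

/-- The point `∞` of `P¹(ℚ)`. -/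
def ptInf : P1 :=
  Projectivization.mk ℚ ![1, 0] (by
    intro h
    have := congrFun h 0
    simp at this)

lemma ptQ_ne_ptInf (x : ℚ) : ptQ x ≠ ptInf := by
  intro h
  rw [ptQ, ptInf, Projectivization.mk_eq_mk_iff] at h
  obtain ⟨a, ha⟩ := h
  have := congrFun ha 1
  simp at this

/-- The set `𝒫(ℚ)` of infinitesimal cusps `π_r(s)`: ordered pairs of distinct
points of `P¹(ℚ)`; the symbol `π_r(s)` corresponds to the pair `(r, s)`. -/
def PP : Type := {p : P1 × P1 // p.1 ≠ p.2}

/-- The infinitesimal cusp `π_r(s)`. -/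
def pi' (r s : P1) (h : r ≠ s) : PP := ⟨(r, s), h⟩

instance : MulAction (GL (Fin 2) ℚ) PP where
  smul γ p := ⟨(γ • p.val.1, γ • p.val.2), fun h => p.prop (MulAction.injective γ h)⟩
  one_smul p := by
    apply Subtype.ext
    show (((1 : GL (Fin 2) ℚ) • p.val.1, (1 : GL (Fin 2) ℚ) • p.val.2) : P1 × P1) = p.val
    simp
  mul_smul γ δ p := by
    apply Subtype.ext
    show ((((γ * δ) : GL (Fin 2) ℚ) • p.val.1, ((γ * δ) : GL (Fin 2) ℚ) • p.val.2) : P1 × P1) = _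
    simp [mul_smul]
    rfl

/-- `Ξ`, the group of divisors on `𝒫(ℚ)`. -/
abbrev Xi : Type := PP →₀ ℤ

/-- `Δ`, the group of divisors on `P¹(ℚ)`. -/
abbrev Delta : Type := P1 →₀ ℤ

/-- `GL₂(ℚ)` acts on divisors on `𝒫(ℚ)`. -/
instance : MulAction (GL (Fin 2) ℚ) Xi where
  smul γ v := Finsupp.mapDomain (γ • ·) v
  one_smul v := by
    show Finsupp.mapDomain _ _ = _
    simp only [one_smul]
    exact Finsupp.mapDomain_id
  mul_smul γ δ v := by
    show Finsupp.mapDomain _ _ = Finsupp.mapDomain _ (Finsupp.mapDomain _ _)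
    rw [← Finsupp.mapDomain_comp]
    congr 1
    funext x
    simp [mul_smul]

/-- `GL₂(ℚ)` acts on divisors on `P¹(ℚ)`. -/
instance : MulAction (GL (Fin 2) ℚ) Delta where
  smul γ v := Finsupp.mapDomain (γ • ·) v
  one_smul v := by
    show Finsupp.mapDomain _ _ = _
    simp only [one_smul]
    exact Finsupp.mapDomain_id
  mul_smul γ δ v := by
    show Finsupp.mapDomain _ _ = Finsupp.mapDomain _ (Finsupp.mapDomain _ _)
    rw [← Finsupp.mapDomain_comp]
    congr 1
    funext x
    simp [mul_smul]

/-- The degree of a divisor on `𝒫(ℚ)`. -/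
def degXi : Xi →+ ℤ := Finsupp.liftAddHom fun _ => AddMonoidHom.id ℤ

/-- The degree of a divisor on `P¹(ℚ)`. -/
def degDelta : Delta →+ ℤ := Finsupp.liftAddHom fun _ => AddMonoidHom.id ℤ

/-- `Ξ₀`, the subgroup of degree-zero divisors on `𝒫(ℚ)`. -/
def Xi0 : AddSubgroup Xi := degXi.ker

/-- `Δ₀`, the subgroup of degree-zero divisors on `P¹(ℚ)`. -/
def Delta0 : AddSubgroup Delta := degDelta.ker

/-- The divisor attached to a point of `𝒫(ℚ)`. -/
def dv (p : PP) : Xi := Finsupp.single p 1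

/-- The divisor attached to a point of `P¹(ℚ)`. -/
def dvP (r : P1) : Delta := Finsupp.single r 1

/-- `[c₁, c₂] = {c₂} - {c₁} ∈ Ξ₀`. -/
def br (c₁ c₂ : PP) : Xi := dv c₂ - dv c₁

/-- The modular symbol `{r, s} = [π_r(s), π_s(r)]`. -/
def msym (r s : P1) (h : r ≠ s) : Xi := br (pi' r s h) (pi' s r h.symm)

/-- The infinitesimal symbol `[s, t]_r = [π_r(s), π_r(t)]`. -/
def isym (r s t : P1) (hs : s ≠ r) (ht : t ≠ r) : Xi :=
  br (pi' r s hs.symm) (pi' r t ht.symm)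

lemma degXi_single (p : PP) (n : ℤ) : degXi (Finsupp.single p n) = n := by
  simp [degXi]

lemma degDelta_single (r : P1) (n : ℤ) : degDelta (Finsupp.single r n) = n := by
  simp [degDelta]

lemma br_mem_Xi0 (c₁ c₂ : PP) : br c₁ c₂ ∈ Xi0 := by
  simp [br, Xi0, AddMonoidHom.mem_ker, dv, degXi_single]

lemma smul_mem_Xi0 (γ : GL (Fin 2) ℚ) {v : Xi} (hv : v ∈ Xi0) : γ • v ∈ Xi0 := by
  have h : degXi (γ • v) = degXi v := by
    show degXi (Finsupp.mapDomain (γ • ·) v) = degXi v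
    simp only [degXi, Finsupp.liftAddHom_apply]
    exact Finsupp.sum_mapDomain_index (fun _ => rfl) (fun _ _ _ => rfl)
  simpa [Xi0, AddMonoidHom.mem_ker, h] using hv

lemma smul_mem_Delta0 (γ : GL (Fin 2) ℚ) {v : Delta} (hv : v ∈ Delta0) : γ • v ∈ Delta0 := by
  have h : degDelta (γ • v) = degDelta v := by
    show degDelta (Finsupp.mapDomain (γ • ·) v) = degDelta v
    simp only [degDelta, Finsupp.liftAddHom_apply]
    exact Finsupp.sum_mapDomain_index (fun _ => rfl) (fun _ _ _ => rfl)
  simpa [Delta0, AddMonoidHom.mem_ker, h] using hv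

lemma brP_mem_Delta0 (r s : P1) : dvP s - dvP r ∈ Delta0 := by
  simp [Delta0, AddMonoidHom.mem_ker, dvP, degDelta_single]

/-- The boundary map `∂ : Ξ → Δ`, induced by `π_r(s) ↦ r`. -/
def bdry : Xi →+ Delta := Finsupp.mapDomain.addMonoidHom fun p : PP => p.val.1

/-- The embedding of `SL₂(ℤ)` in `GL₂(ℚ)`. -/
def toGLQ : SL(2, ℤ) →* GL (Fin 2) ℚ :=
  Matrix.SpecialLinearGroup.toGL.comp (Matrix.SpecialLinearGroup.map (Int.castRingHom ℚ))

end PaperMS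

namespace PaperMS

/-- Numerators of the convergents of a continued fraction, with shifted indexing:
`cfP a (j+2) = p_j` where `p_{-2} = 0`, `p_{-1} = 1`, `p_j = a_j p_{j-1} + p_{j-2}`. -/
def cfP (a : ℕ → ℤ) : ℕ → ℤ
  | 0 => 0
  | 1 => 1
  | (j+2) => a j * cfP a (j+1) + cfP a j

/-- Denominators of the convergents of a continued fraction, with shifted indexing:
`cfQ a (j+2) = q_j` where `q_{-2} = 1`, `q_{-1} = 0`, `q_j = a_j q_{j-1} + q_{j-2}`. -/
def cfQ (a : ℕ → ℤ) : ℕ → ℤ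
  | 0 => 1
  | 1 => 0
  | (j+2) => a j * cfQ a (j+1) + cfQ a j

/-- The extended sequence of partial quotients: `aQ a n j = a_j` for `j ≤ n` and
`aQ a n (n+1) = a_{n+1} := -q_{n-1}/q_n`. -/
def aQ (a : ℕ → ℤ) (n : ℕ) (j : ℕ) : ℚ :=
  if j ≤ n then (a j : ℚ) else -((cfQ a (n+1) : ℚ) / (cfQ a (n+2) : ℚ))

lemma glEquiv_apply (γ : GL (Fin 2) ℚ) (v : Fin 2 → ℚ) :
    glEquiv γ v = γ.val.mulVec v := by
  simp [glEquiv, Matrix.GeneralLinearGroup.toLin]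

lemma smul_mk_P1 (γ : GL (Fin 2) ℚ) (v : Fin 2 → ℚ) (hv : v ≠ 0) :
    γ • Projectivization.mk ℚ v hv = Projectivization.mk ℚ (γ.val.mulVec v)
      (by rw [← glEquiv_apply]; exact fun h => hv ((glEquiv γ).map_eq_zero_iff.mp h)) := by
  rw [smul_P1_def, Projectivization.map_mk, Projectivization.mk_eq_mk_iff']
  exact ⟨1, by simp [glEquiv_apply]⟩

lemma mulVec_two (A B C D x y : ℚ) :
    (!![A,B;C,D]).mulVec ![x,y] = ![A*x+B*y, C*x+D*y] := by
  funext k; fin_cases k <;> simp [Matrix.mulVec, dotProduct, Fin.sum_univ_two]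

lemma smul_vec2 (c x y : ℚ) : c • (![x,y] : Fin 2 → ℚ) = ![c*x, c*y] := by
  funext k; fin_cases k <;> simp

lemma smul_dv (γ : GL (Fin 2) ℚ) (p : PP) : γ • dv p = dv (γ • p) := by
  show Finsupp.mapDomain (γ • ·) (Finsupp.single p 1) = _
  rw [Finsupp.mapDomain_single]; rfl

lemma smul_sub_Xi (γ : GL (Fin 2) ℚ) (x y : Xi) : γ • (x - y) = γ • x - γ • y := by
  show Finsupp.mapDomain (γ • ·) (x - y) =
    Finsupp.mapDomain (γ • ·) x - Finsupp.mapDomain (γ • ·) y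
  exact map_sub (Finsupp.mapDomain.addMonoidHom (γ • ·)) x y

lemma smul_br (γ : GL (Fin 2) ℚ) (c₁ c₂ : PP) :
    γ • br c₁ c₂ = br (γ • c₁) (γ • c₂) := by
  rw [br, br, smul_sub_Xi, smul_dv, smul_dv]

/-- Determinant identity for convergents. -/
lemma detId (a : ℕ → ℤ) : ∀ j, cfP a (j+1) * cfQ a j - cfP a j * cfQ a (j+1) = (-1)^j
  | 0 => by simp [cfP, cfQ]
  | (j+1) => by
    have ih := detId a j
    show cfP a (j+2) * cfQ a (j+1) - cfP a (j+1) * cfQ a (j+2) = (-1)^(j+1)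
    rw [show cfP a (j+2) = a j * cfP a (j+1) + cfP a j from rfl,
        show cfQ a (j+2) = a j * cfQ a (j+1) + cfQ a j from rfl, pow_succ]
    linear_combination (-1 : ℤ) * ih

lemma detIdQ (a : ℕ → ℤ) (j : ℕ) :
    (cfP a (j+1) : ℚ) * cfQ a j - cfP a j * cfQ a (j+1) = (-1)^j := by
  exact_mod_cast detId a j

lemma cfQ_pos (a : ℕ → ℤ) (n : ℕ) (ha : ∀ j, 1 ≤ j → j ≤ n → 1 ≤ a j) :
    ∀ j, j ≤ n → 0 ≤ cfQ a (j+1) ∧ 1 ≤ cfQ a (j+2) := by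
  intro j
  induction j with
  | zero =>
    intro _
    refine ⟨by simp [cfQ], ?_⟩
    show 1 ≤ a 0 * cfQ a 1 + cfQ a 0
    simp [cfQ]
  | succ k ih =>
    intro hk
    obtain ⟨h1, h2⟩ := ih (by omega)
    have hak : 1 ≤ a (k+1) := ha (k+1) (by omega) hk
    refine ⟨?_, ?_⟩
    · show 0 ≤ cfQ a (k+2)
      omega
    · show 1 ≤ a (k+1) * cfQ a (k+2) + cfQ a (k+1)
      nlinarith

/-- The lifted vectors of the points `w_i`. -/
def vv (a : ℕ → ℤ) (n : ℕ) (i : ℕ) : Fin 2 → ℚ :=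
  if i ≤ n+2 then ![(cfP a i : ℚ), (cfQ a i : ℚ)] else ![1, 0]

lemma vv_ne_zero (a : ℕ → ℤ) (n : ℕ) (i : ℕ) : vv a n i ≠ 0 := by
  unfold vv
  split
  · intro h
    have h0 := congrFun h 0
    have h1 := congrFun h 1
    simp only [Fin.zero_eta, Fin.mk_one, Matrix.cons_val_zero, Matrix.cons_val_one, Matrix.head_cons,
      Pi.zero_apply] at h0 h1
    have hd := detIdQ a i
    rw [h0, h1] at hd
    simp at hd
    exact pow_ne_zero i (by norm_num : (-1 : ℚ) ≠ 0) hd.symm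
  · intro h
    have := congrFun h 0
    simp at this

/-- The points `w_i ∈ P¹(ℚ)`. -/
def wpt (a : ℕ → ℤ) (n : ℕ) (i : ℕ) : P1 :=
  Projectivization.mk ℚ (vv a n i) (vv_ne_zero a n i)

lemma wpt_ne (a : ℕ → ℤ) (n : ℕ) (hq : cfQ a (n+2) ≠ 0) :
    ∀ i, i ≤ n+2 → wpt a n i ≠ wpt a n (i+1) := by
  intro i hi h
  unfold wpt at h
  rw [Projectivization.mk_eq_mk_iff'] at h
  obtain ⟨c, hc⟩ := h
  by_cases h1 : i ≤ n+1
  · rw [show vv a n i = ![(cfP a i : ℚ), (cfQ a i : ℚ)] from if_pos (by omega),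
        show vv a n (i+1) = ![(cfP a (i+1) : ℚ), (cfQ a (i+1) : ℚ)] from if_pos (by omega),
        smul_vec2] at hc
    have h0 := congrFun hc 0
    have h2 := congrFun hc 1
    simp only [Fin.zero_eta, Fin.mk_one, Matrix.cons_val_zero, Matrix.cons_val_one, Matrix.head_cons] at h0 h2
    have hd := detIdQ a i
    have hnz : ((-1 : ℚ))^i ≠ 0 := pow_ne_zero _ (by norm_num)
    apply hnz
    rw [← hd, ← h0, ← h2]
    ring
  · rw [show vv a n i = ![(cfP a i : ℚ), (cfQ a i : ℚ)] from if_pos (by omega),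
        show vv a n (i+1) = ![1, 0] from if_neg (by omega), smul_vec2] at hc
    have h2 := congrFun hc 1
    simp only [Fin.zero_eta, Fin.mk_one, Matrix.cons_val_one, Matrix.head_cons, mul_zero] at h2
    have hieq : i = n + 2 := by omega
    subst hieq
    exact hq (by simpa using h2.symm)

open Classical in
/-- The divisor sequence used for telescoping. -/
def Fdv (a : ℕ → ℤ) (n : ℕ) (i : ℕ) : Xi :=
  if h : wpt a n i = wpt a n (i+1) then 0
  else dv (pi' (wpt a n i) (wpt a n (i+1)) h)

lemma keyLast (e p1 p2 q1 q2 : ℚ) (h1 : e * e = 1) (h2 : p2 * q1 - p1 * q2 = e) (h3 : q2 ≠ 0) :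
    (-e / q2) • (![1, 0] : Fin 2 → ℚ) =
      ![e * p2 * (e * -(q1 / q2)) + p1 * 1, e * q2 * (e * -(q1 / q2)) + q1 * 1] := by
  funext k
  fin_cases k <;>
    simp only [Fin.zero_eta, Fin.mk_one, Pi.smul_apply, Matrix.cons_val_zero,
      Matrix.cons_val_one, Matrix.head_cons, smul_eq_mul] <;>
    field_simp
  · linear_combination h2 + (p2 * q1) * h1
  · linear_combination (q2 * q1) * h1

/-- Let `r ∈ ℚ` with continued fraction expansion
`r = a₀ + 1/(a₁ + 1/(⋯ + 1/aₙ))`, with convergents `p_j/q_j`, and set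
`a_{n+1} := -q_{n-1}/q_n` and, for `-1 ≤ j ≤ n`,
`τ_j := [[(-1)^{j-1} p_j, p_{j-1}], [(-1)^{j-1} q_j, q_{j-1}]] ∈ SL₂(ℤ)`.
Then in `Ξ₀` one has
`[π₀(∞), π_r(∞)] + Σ_{j=-1}^{n} τ_j·[π_∞((-1)^{j+1} a_{j+1}), π₀(∞)] = 0`.
(Here the summation index `i = j + 1` runs over `0, …, n+1`.) -/
theorem statement2 (n : ℕ) (a : ℕ → ℤ) (ha : ∀ j, 1 ≤ j → j ≤ n → 1 ≤ a j)
    (r : ℚ) (hr : r = (cfP a (n+2) : ℚ) / (cfQ a (n+2) : ℚ))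
    (τ : ℕ → GL (Fin 2) ℚ)
    (hτ : ∀ i ≤ n+1, ((τ i) : Matrix (Fin 2) (Fin 2) ℚ) =
      !![(-1 : ℚ)^i * (cfP a (i+1) : ℚ), (cfP a i : ℚ);
         (-1 : ℚ)^i * (cfQ a (i+1) : ℚ), (cfQ a i : ℚ)]) :
    br (pi' (ptQ 0) ptInf (ptQ_ne_ptInf 0)) (pi' (ptQ r) ptInf (ptQ_ne_ptInf r)) +
      ∑ i ∈ Finset.range (n+2),
        τ i • br (pi' ptInf (ptQ ((-1 : ℚ)^i * aQ a n i)) (ptQ_ne_ptInf _).symm)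
                 (pi' (ptQ 0) ptInf (ptQ_ne_ptInf 0)) = 0 := by
  classical
  have hq1 : 1 ≤ cfQ a (n+2) := (cfQ_pos a n ha n le_rfl).2
  have hqz : cfQ a (n+2) ≠ 0 := by omega
  have hqQ : (cfQ a (n+2) : ℚ) ≠ 0 := by exact_mod_cast hqz
  have hne := wpt_ne a n hqz
  have hF : ∀ (i : ℕ) (hi : i ≤ n+2),
      Fdv a n i = dv (pi' (wpt a n i) (wpt a n (i+1)) (hne i hi)) := by
    intro i hi
    unfold Fdv
    rw [dif_neg (hne i hi)]
  have hstep : ∀ i ∈ Finset.range (n+2),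
      τ i • br (pi' ptInf (ptQ ((-1 : ℚ)^i * aQ a n i)) (ptQ_ne_ptInf _).symm)
          (pi' (ptQ 0) ptInf (ptQ_ne_ptInf 0)) = Fdv a n i - Fdv a n (i+1) := by
    intro i hi
    rw [Finset.mem_range] at hi
    have hi' : i ≤ n + 1 := by omega
    have hM := hτ i hi'
    have hsq : ((-1 : ℚ))^i * ((-1 : ℚ))^i = 1 := by
      rw [← pow_add]
      exact Even.neg_one_pow ⟨i, rfl⟩
    have hA : τ i • ptInf = wpt a n (i+1) := by
      unfold ptInf wpt
      rw [smul_mk_P1, Projectivization.mk_eq_mk_iff']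
      refine ⟨(-1 : ℚ)^i, ?_⟩
      rw [hM, mulVec_two,
        show vv a n (i+1) = ![(cfP a (i+1) : ℚ), (cfQ a (i+1) : ℚ)] from if_pos (by omega),
        smul_vec2]
      funext k; fin_cases k <;>
        simp only [Fin.zero_eta, Fin.mk_one, Matrix.cons_val_zero, Matrix.cons_val_one, Matrix.head_cons] <;> ring
    have hB : τ i • ptQ 0 = wpt a n i := by
      unfold ptQ wpt
      rw [smul_mk_P1, Projectivization.mk_eq_mk_iff']
      refine ⟨1, ?_⟩
      rw [hM, mulVec_two,
        show vv a n i = ![(cfP a i : ℚ), (cfQ a i : ℚ)] from if_pos (by omega),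
        smul_vec2]
      funext k; fin_cases k <;>
        simp only [Fin.zero_eta, Fin.mk_one, Matrix.cons_val_zero, Matrix.cons_val_one, Matrix.head_cons] <;> ring
    have hC : τ i • ptQ ((-1 : ℚ)^i * aQ a n i) = wpt a n (i+2) := by
      unfold ptQ wpt
      rw [smul_mk_P1, Projectivization.mk_eq_mk_iff']
      by_cases hin : i ≤ n
      · refine ⟨1, ?_⟩
        rw [hM, mulVec_two,
          show vv a n (i+2) = ![(cfP a (i+2) : ℚ), (cfQ a (i+2) : ℚ)] from if_pos (by omega),
          smul_vec2, aQ, if_pos hin,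
          show cfP a (i+2) = a i * cfP a (i+1) + cfP a i from rfl,
          show cfQ a (i+2) = a i * cfQ a (i+1) + cfQ a i from rfl]
        push_cast
        funext k
        fin_cases k
        · simp only [Fin.zero_eta, Fin.mk_one, Matrix.cons_val_zero]
          linear_combination (-(cfP a (i+1) : ℚ) * (a i : ℚ)) * hsq
        · simp only [Fin.zero_eta, Fin.mk_one, Matrix.cons_val_one, Matrix.head_cons, Matrix.cons_val_zero]
          linear_combination (-(cfQ a (i+1) : ℚ) * (a i : ℚ)) * hsq
      · have hieq : i = n + 1 := by omega
        subst hieq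
        refine ⟨(-(-1 : ℚ)^(n+1)) / (cfQ a (n+2) : ℚ), ?_⟩
        rw [hM, mulVec_two,
          show vv a n (n+1+2) = ![1, 0] from if_neg (by omega),
          aQ, if_neg (by omega)]
        have hd := detIdQ a (n+1)
        simp only [show n+1+1 = n+2 from rfl] at hd ⊢
        exact keyLast _ _ _ _ _ hsq hd hqQ
    have h1 : τ i • pi' ptInf (ptQ ((-1 : ℚ)^i * aQ a n i)) (ptQ_ne_ptInf _).symm =
        pi' (wpt a n (i+1)) (wpt a n (i+2)) (hne (i+1) (by omega)) := by
      apply Subtype.ext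
      show (τ i • ptInf, τ i • ptQ ((-1 : ℚ)^i * aQ a n i)) = _
      rw [hA, hC]
      rfl
    have h2 : τ i • pi' (ptQ 0) ptInf (ptQ_ne_ptInf 0) =
        pi' (wpt a n i) (wpt a n (i+1)) (hne i (by omega)) := by
      apply Subtype.ext
      show (τ i • ptQ 0, τ i • ptInf) = _
      rw [hA, hB]
      rfl
    rw [smul_br, h1, h2, hF i (by omega), hF (i+1) (by omega), br]
  rw [Finset.sum_congr rfl hstep, Finset.sum_range_sub' (fun i => Fdv a n i) (n+2)]
  have hw0 : wpt a n 0 = ptQ 0 := by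
    unfold wpt ptQ
    rw [Projectivization.mk_eq_mk_iff']
    refine ⟨1, ?_⟩
    rw [show vv a n 0 = ![(cfP a 0 : ℚ), (cfQ a 0 : ℚ)] from if_pos (by omega)]
    funext k; fin_cases k <;> simp [cfP, cfQ]
  have hw1 : wpt a n 1 = ptInf := by
    unfold wpt ptInf
    rw [Projectivization.mk_eq_mk_iff']
    refine ⟨1, ?_⟩
    rw [show vv a n 1 = ![(cfP a 1 : ℚ), (cfQ a 1 : ℚ)] from if_pos (by omega)]
    funext k; fin_cases k <;> simp [cfP, cfQ]
  have hw2 : wpt a n (n+2) = ptQ r := by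
    unfold wpt ptQ
    rw [Projectivization.mk_eq_mk_iff']
    refine ⟨(cfQ a (n+2) : ℚ), ?_⟩
    rw [show vv a n (n+2) = ![(cfP a (n+2) : ℚ), (cfQ a (n+2) : ℚ)] from if_pos (by omega),
      smul_vec2, hr]
    funext k; fin_cases k <;>
      simp only [Fin.zero_eta, Fin.mk_one, Matrix.cons_val_zero, Matrix.cons_val_one, Matrix.head_cons] <;>
      field_simp
  have hw3 : wpt a n (n+3) = ptInf := by
    unfold wpt ptInf
    rw [Projectivization.mk_eq_mk_iff']
    refine ⟨1, ?_⟩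
    rw [show vv a n (n+3) = ![1, 0] from if_neg (by omega)]
    funext k; fin_cases k <;> simp
  have e0 : Fdv a n 0 = dv (pi' (ptQ 0) ptInf (ptQ_ne_ptInf 0)) := by
    rw [hF 0 (by omega)]
    have hpi : pi' (wpt a n 0) (wpt a n (0+1)) (hne 0 (by omega)) =
        pi' (ptQ 0) ptInf (ptQ_ne_ptInf 0) := by
      apply Subtype.ext
      show (wpt a n 0, wpt a n 1) = (ptQ 0, ptInf)
      rw [hw0, hw1]
    rw [hpi]
  have e2 : Fdv a n (n+2) = dv (pi' (ptQ r) ptInf (ptQ_ne_ptInf r)) := by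
    rw [hF (n+2) (by omega)]
    have hpi : pi' (wpt a n (n+2)) (wpt a n (n+2+1)) (hne (n+2) (by omega)) =
        pi' (ptQ r) ptInf (ptQ_ne_ptInf r) := by
      apply Subtype.ext
      show (wpt a n (n+2), wpt a n (n+2+1)) = (ptQ r, ptInf)
      rw [show n+2+1 = n+3 from rfl, hw2, hw3]
    rw [hpi]
  rw [e0, e2, br]
  abel

end PaperMS
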